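/- Suppose Γ_i ⊂ Λ_i, i = 1,…,J, are full rank lattices in ℝ^n and Δ is a full rank lattice with Δ ⊆ ∩_{i=1}^J Λ_i and Λ_i ⊆ Δ + Γ_i for each i. Then there exists a finite multiset K ⊂ Δ such that for every i and every γ ∈ Λ_i, the proportion |K ∩ (γ + Γ_i)|/|K| = 1/l_i, where l_i = |Λ_i/Γ_i|; i.e., K contains an equal number of points from each coset of Λ_i/Γ_i, simultaneously for all i. (One may take K = D^1 + ⋯ + D^J as a multiset sum, where D^i ⊂ Δ is a transversal of Λ_i/Γ_i.) -/

import Mathlib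

open Classical

def IsFullLattice {n : ℕ} (L : AddSubgroup (EuclideanSpace ℝ (Fin n))) : Prop :=
  ∃ b : Module.Basis (Fin n) ℝ (EuclideanSpace ℝ (Fin n)),
    L = AddSubgroup.closure (Set.range b)

/-- existence of a finite multiset `K ⊆ Δ` containing an equal number
of points from each coset of `Λᵢ/Γᵢ`, simultaneously for all `i`. -/
theorem stmt17 {n J : ℕ} (Γ Λ : Fin J → AddSubgroup (EuclideanSpace ℝ (Fin n)))
    (hΓ : ∀ i, IsFullLattice (Γ i)) (hΛ : ∀ i, IsFullLattice (Λ i))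
    (hsub : ∀ i, Γ i ≤ Λ i)
    (Δ : AddSubgroup (EuclideanSpace ℝ (Fin n))) (hΔ : IsFullLattice Δ)
    (hΔΛ : ∀ i, Δ ≤ Λ i)
    (hΛΔΓ : ∀ i, ∀ x ∈ Λ i, ∃ d ∈ Δ, ∃ g ∈ Γ i, x = d + g)
    -- `l i = |Λ i / Γ i|`, witnessed by an exact transversal `t i` of `Λ i / Γ i`
    (l : Fin J → ℕ) (hl : ∀ i, 0 < l i)
    (t : (i : Fin J) → Fin (l i) → EuclideanSpace ℝ (Fin n))
    (htmem : ∀ i a, t i a ∈ Λ i)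
    (htdist : ∀ i, ∀ a b, a ≠ b → t i a - t i b ∉ Γ i)
    (htcover : ∀ i, ∀ x ∈ Λ i, ∃ a, x - t i a ∈ Γ i) :
    ∃ K : Multiset (EuclideanSpace ℝ (Fin n)), K ≠ 0 ∧
      (∀ x ∈ K, x ∈ Δ) ∧
      ∀ i : Fin J, ∀ γ ∈ Λ i,
        ((K.countP fun x => ∃ g ∈ Γ i, x = γ + g : ℕ) : ℝ) / (Multiset.card K : ℝ) =
          1 / (l i : ℝ) := by
  -- choose representatives `d i a ∈ Δ` with `d i a - t i a ∈ Γ i`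
  have hd : ∀ i a, ∃ x, x ∈ Δ ∧ x - t i a ∈ Γ i := by
    intro i a
    obtain ⟨dd, hdΔ, g, hg, hx⟩ := hΛΔΓ i (t i a) (htmem i a)
    refine ⟨dd, hdΔ, ?_⟩
    have : dd - t i a = -g := by rw [hx]; abel
    rw [this]; exact (Γ i).neg_mem hg
  choose d hdΔ hdΓ using hd
  haveI : ∀ j, Nonempty (Fin (l j)) := fun j => ⟨⟨0, hl j⟩⟩
  haveI : Nonempty (∀ j, Fin (l j)) := ⟨fun j => Classical.arbitrary _⟩
  set f : (∀ j, Fin (l j)) → EuclideanSpace ℝ (Fin n) := fun a => ∑ j, d j (a j) with hf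
  refine ⟨(Finset.univ : Finset (∀ j, Fin (l j))).val.map f, ?_, ?_, ?_⟩
  · simp only [ne_eq, Multiset.map_eq_zero, Finset.val_eq_zero, Finset.univ_eq_empty_iff]
    exact not_isEmpty_of_nonempty _
  · intro x hx
    obtain ⟨a, _, rfl⟩ := Multiset.mem_map.mp hx
    exact Δ.sum_mem fun j _ => hdΔ j (a j)
  intro i γ hγ
  -- the membership predicate as a coset condition
  have hpred : ∀ v, (∃ g ∈ Γ i, v = γ + g) ↔ v - γ ∈ Γ i := by
    intro v
    constructor
    · rintro ⟨g, hg, rfl⟩; simpa using hg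
    · intro h; exact ⟨v - γ, h, by abel⟩
  -- uniqueness of the transversal element
  have huniq : ∀ c ∈ Λ i, ∃! x : Fin (l i), d i x - c ∈ Γ i := by
    intro c hc
    obtain ⟨a, ha⟩ := htcover i c hc
    refine ⟨a, ?_, ?_⟩
    · show d i a - c ∈ Γ i
      have : d i a - c = (d i a - t i a) - (c - t i a) := by abel
      rw [this]; exact (Γ i).sub_mem (hdΓ i a) ha
    · intro b hb
      by_contra hne
      apply htdist i b a hne
      have hfirst : d i a - c = (d i a - t i a) - (c - t i a) := by abel
      have haΓ : d i a - c ∈ Γ i := by rw [hfirst]; exact (Γ i).sub_mem (hdΓ i a) ha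
      have : t i b - t i a =
          (d i b - c) - (d i b - t i b) - ((d i a - c) - (d i a - t i a)) := by abel
      rw [this]
      exact (Γ i).sub_mem ((Γ i).sub_mem hb (hdΓ i b)) ((Γ i).sub_mem haΓ (hdΓ i a))
  -- compute the count via splitting off coordinate `i`
  have hcount : ((Finset.univ : Finset (∀ j, Fin (l j))).val.map f).countP
      (fun x => ∃ g ∈ Γ i, x = γ + g) = ∏ j : { j // j ≠ i }, l j := by
    rw [Multiset.countP_map]
    rw [← Finset.filter_val, Finset.card_val]
    rw [Finset.card_filter]
    rw [← Fintype.sum_equiv (Equiv.piSplitAt i fun j => Fin (l j)).symm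
      (fun p => if ∃ g ∈ Γ i, f ((Equiv.piSplitAt i fun j => Fin (l j)).symm p) = γ + g
        then 1 else 0)
      (fun a => if ∃ g ∈ Γ i, f a = γ + g then 1 else 0) (fun p => rfl)]
    rw [Fintype.sum_prod_type, Finset.sum_comm]
    have hsplit : ∀ (x : Fin (l i)) (y : ∀ j : { j // j ≠ i }, Fin (l j)),
        f ((Equiv.piSplitAt i fun j => Fin (l j)).symm (x, y)) =
          d i x + ∑ j : { j // j ≠ i }, d j.1 (y j) := by
      intro x y
      show (∑ j, d j ((Equiv.piSplitAt i fun j => Fin (l j)).symm (x, y) j)) = _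
      rw [← Finset.add_sum_erase Finset.univ _ (Finset.mem_univ i)]
      congr 1
      · simp
      · rw [Finset.sum_subtype (p := fun j => j ≠ i)
          (Finset.univ.erase i) (fun j => by simp)
          (fun j => d j ((Equiv.piSplitAt i fun j => Fin (l j)).symm (x, y) j))]
        exact Finset.sum_congr rfl fun j _ => by simp [j.2]
    have hinner : ∀ y : ∀ j : { j // j ≠ i }, Fin (l j),
        (∑ x : Fin (l i), if ∃ g ∈ Γ i,
            f ((Equiv.piSplitAt i fun j => Fin (l j)).symm (x, y)) = γ + g then 1 else 0) = 1 := by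
      intro y
      set c : EuclideanSpace ℝ (Fin n) := γ - ∑ j : { j // j ≠ i }, d j.1 (y j) with hc
      have hcΛ : c ∈ Λ i := by
        refine (Λ i).sub_mem hγ ((Λ i).sum_mem fun j _ => hΔΛ i (hdΔ j.1 (y j)))
      obtain ⟨x₀, hx₀, hx₀u⟩ := huniq c hcΛ
      have hiff : ∀ x : Fin (l i),
          (∃ g ∈ Γ i, f ((Equiv.piSplitAt i fun j => Fin (l j)).symm (x, y)) = γ + g) ↔ x = x₀ := by
        intro x
        rw [hpred, hsplit]
        have heq : d i x + (∑ j : { j // j ≠ i }, d j.1 (y j)) - γ = d i x - c := by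
          rw [hc]; abel
        rw [heq]
        constructor
        · intro h; exact hx₀u x h
        · rintro rfl; exact hx₀
      simp only [hiff]
      simp
    rw [Finset.sum_congr rfl fun y _ => hinner y]
    simp [Fintype.card_pi]
  rw [hcount]
  have hcard : (Multiset.card ((Finset.univ : Finset (∀ j, Fin (l j))).val.map f)) =
      l i * ∏ j : { j // j ≠ i }, l j := by
    rw [Multiset.card_map, Finset.card_val, Finset.card_univ, Fintype.card_pi]
    simp only [Fintype.card_fin]
    rw [← Finset.mul_prod_erase Finset.univ _ (Finset.mem_univ i)]
    congr 1
    exact Finset.prod_subtype (p := fun j => j ≠ i) (Finset.univ.erase i) (fun j => by simp) l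
  rw [hcard]
  have h1 : ((∏ j : { j // j ≠ i }, l j : ℕ) : ℝ) ≠ 0 := by
    exact_mod_cast (Finset.prod_pos fun (j : { j // j ≠ i }) _ => hl j.1).ne'
  have h2 : ((l i : ℕ) : ℝ) ≠ 0 := by exact_mod_cast (hl i).ne'
  rw [Nat.cast_mul, div_eq_div_iff (mul_ne_zero h2 h1) h2]
  ring
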